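/- Let C_n(x) = Σ_G x^{e(G)}, summing over all labeled connected simple graphs G on n vertices, where e(G) is the number of edges. Then C_n(x) = x^{n−1} I_n(1+x), where I_n is the inversion enumerator of labeled trees on n vertices. -/

import Mathlib

/-- The number of inversions of a labeled tree on vertex set `{0, 1, ..., n}`:
pairs `(i, j)` with `0 < i < j` such that `j` lies on the (unique) path from `i` to `0`. -/
noncomputable def treeInv {n : ℕ} (T : SimpleGraph (Fin (n + 1))) : ℕ :=
  Nat.card {p : Fin (n + 1) × Fin (n + 1) //
    0 < p.1 ∧ p.1 < p.2 ∧ ∀ w : T.Walk p.1 0, w.IsPath → p.2 ∈ w.support}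

open scoped Classical in
/-- The inversion enumerator `I_{n+1}(y) = Σ_{T ∈ LT_{n+1}} y^{inv T}` of labeled trees
on the vertex set `{0, 1, ..., n}`. -/
noncomputable def invPoly (n : ℕ) : Polynomial ℤ :=
  ∑ᶠ T : {G : SimpleGraph (Fin (n + 1)) // G.IsTree}, (Polynomial.X : Polynomial ℤ) ^ treeInv T.1

open scoped Classical in
/-- The edge enumerator of labeled connected simple graphs on `n` vertices. -/
noncomputable def connPoly (n : ℕ) : Polynomial ℤ :=
  ∑ᶠ G : {G : SimpleGraph (Fin n) // G.Connected}, (Polynomial.X : Polynomial ℤ) ^ G.1.edgeFinset.card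


open Function

/-- Rooted trees on `Fin (n+1)` as parent functions. -/
def RTree (n : ℕ) := {p : Fin (n + 1) → Fin (n + 1) // p 0 = 0 ∧ ∀ v, ∃ k, p^[k] v = 0}

open scoped Classical in
noncomputable instance {n : ℕ} : Fintype (RTree n) := Subtype.fintype _

namespace RTree

variable {n : ℕ}

def p (t : RTree n) : Fin (n + 1) → Fin (n + 1) := t.1

lemma root (t : RTree n) : t.p 0 = 0 := t.2.1
lemma reach (t : RTree n) (v : Fin (n + 1)) : ∃ k, t.p^[k] v = 0 := t.2.2 v

noncomputable def depth (t : RTree n) (v : Fin (n + 1)) : ℕ := Nat.find (t.reach v)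

lemma iterate_depth (t : RTree n) (v : Fin (n + 1)) : t.p^[t.depth v] v = 0 :=
  Nat.find_spec (t.reach v)

lemma depth_le {t : RTree n} {v : Fin (n + 1)} {k : ℕ} (h : t.p^[k] v = 0) :
    t.depth v ≤ k := Nat.find_le h

lemma depth_zero (t : RTree n) : t.depth 0 = 0 :=
  Nat.le_zero.mp (depth_le (by simp))

lemma depth_eq_zero_iff {t : RTree n} {v : Fin (n + 1)} : t.depth v = 0 ↔ v = 0 := by
  constructor
  · intro h
    have := t.iterate_depth v
    rwa [h, iterate_zero_apply] at this
  · rintro rfl; exact t.depth_zero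

lemma depth_parent {t : RTree n} {v : Fin (n + 1)} (hv : v ≠ 0) :
    t.depth (t.p v) + 1 = t.depth v := by
  have h1 : t.depth v ≠ 0 := fun h => hv (depth_eq_zero_iff.mp h)
  obtain ⟨m, hm⟩ := Nat.exists_eq_succ_of_ne_zero h1
  have h2 : t.p^[m] (t.p v) = 0 := by
    have := t.iterate_depth v
    rwa [hm, iterate_succ_apply] at this
  have h3 : t.depth (t.p v) ≤ m := depth_le h2
  have h4 : m ≤ t.depth (t.p v) := by
    by_contra h
    push_neg at h
    have : t.p^[t.depth (t.p v) + 1] v = 0 := by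
      rw [iterate_succ_apply]
      exact t.iterate_depth (t.p v)
    have := depth_le this
    omega
  omega

lemma depth_iterate (t : RTree n) (v : Fin (n + 1)) (k : ℕ) (hk : k ≤ t.depth v) :
    t.depth (t.p^[k] v) = t.depth v - k := by
  induction k with
  | zero => simp
  | succ m ih =>
    have hm : m ≤ t.depth v := by omega
    have h1 : t.p^[m] v ≠ 0 := by
      intro h
      have := depth_le h
      omega
    have h2 := depth_parent (t := t) h1
    rw [ih hm] at h2
    rw [iterate_succ_apply']
    omega

lemma iterate_ge_depth (t : RTree n) (v : Fin (n + 1)) (k : ℕ) (hk : t.depth v ≤ k) :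
    t.p^[k] v = 0 := by
  obtain ⟨m, rfl⟩ := Nat.exists_eq_add_of_le' hk
  have h0 : ∀ m, t.p^[m] 0 = 0 := by
    intro m
    induction m with
    | zero => rfl
    | succ l ih => rw [iterate_succ_apply, t.root, ih]
  rw [iterate_add_apply, t.iterate_depth v, h0]

lemma parent_ne {t : RTree n} {v : Fin (n + 1)} (hv : v ≠ 0) : t.p v ≠ v := by
  intro h
  have h1 : ∀ k, t.p^[k] v = v := by
    intro k
    induction k with
    | zero => rfl
    | succ m ih => rw [iterate_succ_apply, h, ih]
  obtain ⟨k, hk⟩ := t.reach v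
  rw [h1 k] at hk
  exact hv hk

lemma eq_zero_of_cycle {t : RTree n} {v : Fin (n + 1)} {m : ℕ} (hm : m ≠ 0)
    (h : t.p^[m] v = v) : v = 0 := by
  by_contra hv
  have hd := t.depth_iterate v m (by
    by_contra hle
    push_neg at hle
    rw [t.iterate_ge_depth v m (by omega)] at h
    exact hv h.symm)
  rw [h] at hd
  have : t.depth v ≠ 0 := fun h0 => hv (depth_eq_zero_iff.mp h0)
  omega

/-- `j` is a (weak) ancestor of `i`. -/
def Anc (t : RTree n) (j i : Fin (n + 1)) : Prop := ∃ k, t.p^[k] i = j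

lemma anc_depth_le {t : RTree n} {j i : Fin (n + 1)} (h : t.Anc j i) :
    ∃ k ≤ t.depth i, t.p^[k] i = j := by
  obtain ⟨k, hk⟩ := h
  rcases le_or_gt k (t.depth i) with h' | h'
  · exact ⟨k, h', hk⟩
  · refine ⟨t.depth i, le_rfl, ?_⟩
    rw [t.iterate_ge_depth i k (by omega)] at hk
    rw [← hk, t.iterate_depth]

lemma anc_unique_k {t : RTree n} {i : Fin (n + 1)} {k l : ℕ}
    (hk : k ≤ t.depth i) (hl : l ≤ t.depth i) (h : t.p^[k] i = t.p^[l] i) : k = l := by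
  have h1 := t.depth_iterate i k hk
  have h2 := t.depth_iterate i l hl
  rw [h] at h1
  omega

lemma anc_strict_depth {t : RTree n} {j i : Fin (n + 1)} (h : t.Anc j i) (hne : j ≠ i) :
    t.depth j < t.depth i := by
  obtain ⟨k, hk, hik⟩ := anc_depth_le h
  have := t.depth_iterate i k hk
  rw [hik] at this
  have hk0 : k ≠ 0 := by rintro rfl; exact hne hik.symm
  omega

lemma anc_eq_of_depth_eq {t : RTree n} {j j' i : Fin (n + 1)} (h : t.Anc j i) (h' : t.Anc j' i)
    (hd : t.depth j = t.depth j') : j = j' := by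
  obtain ⟨k, hk, hik⟩ := anc_depth_le h
  obtain ⟨k', hk', hik'⟩ := anc_depth_le h'
  have e1 := t.depth_iterate i k hk
  have e2 := t.depth_iterate i k' hk'
  rw [hik] at e1; rw [hik'] at e2
  have : k = k' := by omega
  rw [← hik, ← hik', this]

/-- Inversion pairs of a rooted tree. -/
def InvPair (t : RTree n) (q : Fin (n + 1) × Fin (n + 1)) : Prop :=
  0 < q.1 ∧ q.1 < q.2 ∧ t.Anc q.2 q.1

end RTree
open SimpleGraph

namespace SimpleGraph

variable {V : Type*} {G : SimpleGraph V} {u v : V}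

lemma Walk.IsPath.getVert_inj {p : G.Walk u v} (hp : p.IsPath) {i j : ℕ}
    (hi : i ≤ p.length) (hj : j ≤ p.length) (h : p.getVert i = p.getVert j) : i = j := by
  induction p generalizing i j with
  | nil => simp at hi hj; omega
  | @cons a b c hab q ih =>
    rw [Walk.cons_isPath_iff] at hp
    match i, j with
    | 0, 0 => rfl
    | 0, j + 1 =>
      exfalso
      apply hp.2
      rw [Walk.mem_support_iff_exists_getVert]
      rw [Walk.getVert_zero, Walk.getVert_cons_succ] at h
      exact ⟨j, h.symm, by simpa using hj⟩
    | i + 1, 0 =>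
      exfalso
      apply hp.2
      rw [Walk.mem_support_iff_exists_getVert]
      rw [Walk.getVert_zero, Walk.getVert_cons_succ] at h
      exact ⟨i, h, by simpa using hi⟩
    | i + 1, j + 1 =>
      have := ih hp.1 (by simpa using hi) (by simpa using hj) (by simpa using h)
      omega

end SimpleGraph

namespace RTree

variable {n : ℕ}

def graph (t : RTree n) : SimpleGraph (Fin (n + 1)) :=
  SimpleGraph.fromRel (fun a b => a ≠ 0 ∧ t.p a = b)

lemma graph_adj_iff {t : RTree n} {a b : Fin (n + 1)} :
    t.graph.Adj a b ↔ a ≠ b ∧ ((a ≠ 0 ∧ t.p a = b) ∨ (b ≠ 0 ∧ t.p b = a)) := by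
  rfl

lemma adj_parent (t : RTree n) {v : Fin (n + 1)} (hv : v ≠ 0) : t.graph.Adj v (t.p v) :=
  ⟨(parent_ne hv).symm, Or.inl ⟨hv, rfl⟩⟩

lemma anc_depth_le' {t : RTree n} {j i : Fin (n + 1)} (h : t.Anc j i) :
    t.depth j ≤ t.depth i := by
  obtain ⟨k, hk, hik⟩ := anc_depth_le h
  have := t.depth_iterate i k hk
  rw [hik] at this
  omega

lemma anc_zero {t : RTree n} {j : Fin (n + 1)} : t.Anc j 0 ↔ j = 0 := by
  constructor
  · rintro ⟨k, hk⟩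
    rw [t.iterate_ge_depth 0 k (by rw [t.depth_zero]; omega)] at hk
    exact hk.symm
  · rintro rfl; exact ⟨0, rfl⟩

lemma anc_refl (t : RTree n) (v : Fin (n + 1)) : t.Anc v v := ⟨0, rfl⟩

lemma anc_succ {t : RTree n} {j v : Fin (n + 1)} (hv : v ≠ 0) :
    t.Anc j v ↔ j = v ∨ t.Anc j (t.p v) := by
  constructor
  · rintro ⟨k, hk⟩
    match k with
    | 0 => exact Or.inl hk.symm
    | k + 1 =>
      right
      exact ⟨k, by rw [← iterate_succ_apply]; exact hk⟩
  · rintro (rfl | ⟨k, hk⟩)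
    · exact t.anc_refl _
    · exact ⟨k + 1, by rw [iterate_succ_apply]; exact hk⟩

noncomputable def chainWalk (t : RTree n) (v : Fin (n + 1)) : t.graph.Walk v 0 :=
  if h : v = 0 then SimpleGraph.Walk.nil.copy h.symm rfl
  else SimpleGraph.Walk.cons (t.adj_parent h) (t.chainWalk (t.p v))
termination_by t.depth v
decreasing_by
  have := depth_parent (t := t) h
  omega

lemma mem_support_chainWalk {t : RTree n} {v j : Fin (n + 1)} :
    j ∈ (t.chainWalk v).support ↔ t.Anc j v := by
  suffices H : ∀ d (v : Fin (n + 1)), t.depth v ≤ d →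
      (j ∈ (t.chainWalk v).support ↔ t.Anc j v) from H _ v le_rfl
  intro d
  induction d with
  | zero =>
    intro v hv
    have hv0 : v = 0 := depth_eq_zero_iff.mp (Nat.le_zero.mp hv)
    subst hv0
    rw [chainWalk]
    simp [anc_zero]
  | succ d ih =>
    intro v hv
    rw [chainWalk]
    split
    · next h => subst h; simp [anc_zero]
    · next h =>
      rw [SimpleGraph.Walk.support_cons]
      have hdp := depth_parent (t := t) h
      rw [List.mem_cons, ih _ (by omega), anc_succ h]

lemma chainWalk_isPath (t : RTree n) (v : Fin (n + 1)) : (t.chainWalk v).IsPath := by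
  suffices H : ∀ d (v : Fin (n + 1)), t.depth v ≤ d → (t.chainWalk v).IsPath from H _ v le_rfl
  intro d
  induction d with
  | zero =>
    intro v hv
    have hv0 : v = 0 := depth_eq_zero_iff.mp (Nat.le_zero.mp hv)
    subst hv0
    rw [chainWalk]
    simp
  | succ d ih =>
    intro v hv
    rw [chainWalk]
    split
    · next h => subst h; simp
    · next h =>
      have hdp := depth_parent (t := t) h
      rw [SimpleGraph.Walk.cons_isPath_iff]
      refine ⟨ih _ (by omega), fun hmem => ?_⟩
      rw [mem_support_chainWalk] at hmem
      have h1 := anc_depth_le' hmem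
      omega

lemma graph_connected (t : RTree n) : t.graph.Connected := by
  rw [SimpleGraph.connected_iff]
  refine ⟨fun a b => ?_, ⟨0⟩⟩
  exact (t.chainWalk a).reachable.trans (t.chainWalk b).reachable.symm

lemma graph_isAcyclic (t : RTree n) : t.graph.IsAcyclic := by
  intro w c hc
  classical
  -- find max-depth vertex on the cycle
  obtain ⟨u, hu_mem, hu_max⟩ :=
    Finset.exists_max_image c.support.toFinset (fun x => t.depth x)
      ⟨w, by simp [SimpleGraph.Walk.start_mem_support]⟩
  simp only [List.mem_toFinset] at hu_mem
  have key : ∀ (c'' : t.graph.Walk u u), c''.IsCycle →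
      (∀ x ∈ c''.support, t.depth x ≤ t.depth u) → False := by
    intro c'' hcyc hdep
    have hlen := hcyc.three_le_length
    cases c'' with
    | nil => simp at hlen
    | @cons _ b _ h q =>
      rw [SimpleGraph.Walk.cons_isCycle_iff] at hcyc
      have hq : q.IsPath := hcyc.1
      have hqlen : 2 ≤ q.length := by
        simp only [SimpleGraph.Walk.length_cons] at hlen
        omega
      set b' := q.getVert (q.length - 1) with hb'
      have hadj' : t.graph.Adj b' u := by
        have := q.adj_getVert_succ (i := q.length - 1) (by omega)
        rwa [show q.length - 1 + 1 = q.length by omega, q.getVert_length] at this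
      have hb_mem : b ∈ q.support := SimpleGraph.Walk.start_mem_support q
      have hb'_mem : b' ∈ q.support := by
        rw [SimpleGraph.Walk.mem_support_iff_exists_getVert]
        exact ⟨q.length - 1, rfl, by omega⟩
      have hdb : t.depth b ≤ t.depth u := hdep b (by simp [hb_mem])
      have hdb' : t.depth b' ≤ t.depth u := hdep b' (by simp [hb'_mem])
      have hu0 : u ≠ 0 := by
        intro h0
        have : t.depth b = 0 := by
          have := t.depth_zero
          rw [h0] at hdb
          omega
        have hb0 := depth_eq_zero_iff.mp this
        rw [h0, hb0] at h
        exact t.graph.irrefl h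
      -- both b and b' must equal t.p u
      have hb : b = t.p u := by
        rcases h.2 with ⟨_, hpu⟩ | ⟨hb0, hpb⟩
        · exact hpu.symm
        · exfalso
          have := depth_parent (t := t) hb0
          rw [hpb] at this
          omega
      have hb'eq : b' = t.p u := by
        rcases hadj'.2 with ⟨hb'0, hpb'⟩ | ⟨_, hpu⟩
        · exfalso
          have := depth_parent (t := t) hb'0
          rw [hpb'] at this
          omega
        · exact hpu.symm
      have : (0 : ℕ) = q.length - 1 := by
        apply hq.getVert_inj (by omega) (by omega)
        rw [q.getVert_zero, ← hb', hb, hb'eq]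
      omega
  have hc' := hc.rotate hu_mem
  apply key _ hc'
  intro x hx
  rcases (SimpleGraph.Walk.mem_support_iff _).mp hx with rfl | hx'
  · rfl
  · have : x ∈ c.support.tail := ((SimpleGraph.Walk.support_rotate c u hu_mem).mem_iff).mp hx'
    exact hu_max x (by simp [List.mem_toFinset, List.mem_of_mem_tail this])

end RTree
namespace RTree

variable {n : ℕ}

lemma graph_isTree (t : RTree n) : t.graph.IsTree := ⟨t.graph_connected, t.graph_isAcyclic⟩

lemma path_eq_chainWalk (t : RTree n) {v : Fin (n + 1)} (w : t.graph.Walk v 0)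
    (hw : w.IsPath) : w = t.chainWalk v :=
  (t.graph_isTree.existsUnique_path v 0).unique hw (t.chainWalk_isPath v)

lemma treeInv_graph (t : RTree n) : treeInv t.graph = Nat.card {q : Fin (n+1) × Fin (n+1) // t.InvPair q} := by
  apply Nat.card_congr
  apply Equiv.subtypeEquivRight
  intro q
  unfold InvPair
  refine and_congr_right fun _ => and_congr_right fun _ => ?_
  constructor
  · intro h
    rw [← mem_support_chainWalk]
    exact h (t.chainWalk q.1) (t.chainWalk_isPath q.1)
  · intro h w hw
    rw [t.path_eq_chainWalk w hw, mem_support_chainWalk]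
    exact h

end RTree

section OfTree

open SimpleGraph

variable {n : ℕ} {G : SimpleGraph (Fin (n + 1))}

/-- The canonical path to `0` in a tree graph. -/
noncomputable def treePath (hG : G.IsTree) (v : Fin (n + 1)) : G.Walk v 0 :=
  ((hG.existsUnique_path v 0).exists).choose

lemma treePath_isPath (hG : G.IsTree) (v : Fin (n + 1)) : (treePath hG v).IsPath :=
  ((hG.existsUnique_path v 0).exists).choose_spec

lemma treePath_unique (hG : G.IsTree) {v : Fin (n + 1)} (w : G.Walk v 0) (hw : w.IsPath) :
    w = treePath hG v :=
  (hG.existsUnique_path v 0).unique hw (treePath_isPath hG v)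

/-- The parent function of a tree graph. -/
noncomputable def pOf (hG : G.IsTree) (v : Fin (n + 1)) : Fin (n + 1) :=
  if v = 0 then 0 else (treePath hG v).getVert 1

lemma treePath_not_nil (hG : G.IsTree) {v : Fin (n + 1)} (hv : v ≠ 0) :
    ¬ (treePath hG v).Nil := Walk.not_nil_of_ne hv

lemma adj_pOf (hG : G.IsTree) {v : Fin (n + 1)} (hv : v ≠ 0) : G.Adj v (pOf hG v) := by
  rw [pOf, if_neg hv]
  exact Walk.adj_snd (treePath_not_nil hG hv)

lemma treePath_pOf (hG : G.IsTree) {v : Fin (n + 1)} (hv : v ≠ 0) :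
    (treePath hG v).tail.copy (by rw [pOf, if_neg hv]) rfl = treePath hG (pOf hG v) := by
  apply treePath_unique
  rw [Walk.isPath_copy]
  exact (treePath_isPath hG v).tail

lemma length_treePath_pOf (hG : G.IsTree) {v : Fin (n + 1)} (hv : v ≠ 0) :
    (treePath hG (pOf hG v)).length + 1 = (treePath hG v).length := by
  rw [← treePath_pOf hG hv, Walk.length_copy]
  exact Walk.length_tail_add_one (treePath_not_nil hG hv)

lemma pOf_reach (hG : G.IsTree) (v : Fin (n + 1)) : ∃ k, (pOf hG)^[k] v = 0 := by
  suffices H : ∀ L (v : Fin (n + 1)), (treePath hG v).length ≤ L → ∃ k, (pOf hG)^[k] v = 0 from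
    H _ v le_rfl
  intro L
  induction L with
  | zero =>
    intro v hv
    by_cases h0 : v = 0
    · exact ⟨0, h0⟩
    · exfalso
      have := length_treePath_pOf hG h0
      omega
  | succ L ih =>
    intro v hv
    by_cases h0 : v = 0
    · exact ⟨0, h0⟩
    · have hlen := length_treePath_pOf hG h0
      obtain ⟨k, hk⟩ := ih (pOf hG v) (by omega)
      exact ⟨k + 1, by rw [Function.iterate_succ_apply, hk]⟩

/-- The rooted tree of a tree graph. -/
noncomputable def tOfTree (hG : G.IsTree) : RTree n :=
  ⟨pOf hG, by rw [pOf, if_pos rfl], pOf_reach hG⟩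

lemma pOf_graph (t : RTree n) : pOf t.graph_isTree = t.p := by
  funext v
  by_cases hv : v = 0
  · rw [pOf, if_pos hv, hv, t.root]
  · rw [pOf, if_neg hv]
    have : treePath t.graph_isTree v = t.chainWalk v :=
      t.path_eq_chainWalk _ (treePath_isPath _ v)
    rw [this]
    conv_lhs => rw [RTree.chainWalk, dif_neg hv]
    exact Walk.snd_cons _ _

lemma adj_pOf_cases (hG : G.IsTree) {a b : Fin (n + 1)} (hab : G.Adj a b) :
    pOf hG a = b ∨ pOf hG b = a := by
  classical
  by_cases hb : b ∈ (treePath hG a).support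
  · left
    have hne : a ≠ b := hab.ne
    set D := (treePath hG a).dropUntil b hb with hD
    have hDpath : D.IsPath := (treePath_isPath hG a).dropUntil hb
    have haD : a ∉ D.support := by
      intro haD
      have hnodup : ((treePath hG a).takeUntil b hb).support.Disjoint D.support.tail := by
        have := (treePath_isPath hG a).support_nodup
        rw [← (treePath hG a).take_spec hb, Walk.support_append, List.nodup_append] at this
        exact List.disjoint_iff_ne.mpr this.2.2
      have haT : a ∈ ((treePath hG a).takeUntil b hb).support := Walk.start_mem_support _
      have haDt : a ∈ D.support.tail := by
        have := haD
        rw [D.support_eq_cons] at this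
        rcases List.mem_cons.mp this with h1 | h1
        · exact absurd h1.symm hne.symm
        · exact h1
      exact hnodup haT haDt
    have hW : (Walk.cons hab D).IsPath := by
      rw [Walk.cons_isPath_iff]
      exact ⟨hDpath, haD⟩
    have ha0 : ¬ (a = 0) := by
      rintro rfl
      have e := treePath_unique hG (SimpleGraph.Walk.nil' (0 : Fin (n+1))) (by simp)
      rw [← e] at hb
      simp at hb
      exact hne hb.symm
    have := treePath_unique hG _ hW
    rw [pOf, if_neg ha0, ← this]
    exact Walk.snd_cons _ _
  · right
    have hW : (Walk.cons hab.symm (treePath hG a)).IsPath := by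
      rw [Walk.cons_isPath_iff]
      exact ⟨treePath_isPath hG a, hb⟩
    have hb0 : ¬ (b = 0) := by
      rintro rfl
      exact hb (Walk.end_mem_support _)
    have := treePath_unique hG _ hW
    rw [pOf, if_neg hb0, ← this]
    exact Walk.snd_cons _ _

end OfTree
section TreeEquiv

open SimpleGraph

variable {n : ℕ} {G : SimpleGraph (Fin (n + 1))}

lemma graph_tOfTree (hG : G.IsTree) : (tOfTree hG).graph = G := by
  ext a b
  rw [RTree.graph_adj_iff]
  constructor
  · rintro ⟨hne, ⟨ha0, rfl⟩ | ⟨hb0, rfl⟩⟩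
    · exact adj_pOf hG ha0
    · exact (adj_pOf hG hb0).symm
  · intro hab
    refine ⟨hab.ne, ?_⟩
    rcases adj_pOf_cases hG hab with h | h
    · left
      refine ⟨?_, h⟩
      rintro rfl
      rw [pOf, if_pos rfl] at h
      exact hab.ne h
    · right
      refine ⟨?_, h⟩
      rintro rfl
      rw [pOf, if_pos rfl] at h
      exact hab.ne h.symm

/-- The equivalence between rooted trees (as parent functions) and tree graphs. -/
noncomputable def treeEquiv (n : ℕ) : RTree n ≃ {G : SimpleGraph (Fin (n + 1)) // G.IsTree} where
  toFun t := ⟨t.graph, t.graph_isTree⟩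
  invFun T := tOfTree T.2
  left_inv t := Subtype.ext (pOf_graph t)
  right_inv T := Subtype.ext (graph_tOfTree T.2)

lemma treeInv_treeEquiv (t : RTree n) :
    treeInv ((treeEquiv n) t).1 = Nat.card {q : Fin (n+1) × Fin (n+1) // t.InvPair q} :=
  t.treeInv_graph

end TreeEquiv
section DFS

open SimpleGraph Function

variable {n : ℕ}

open scoped Classical in
/-- Unvisited neighbors. -/
noncomputable def nbrs (G : SimpleGraph (Fin (n + 1))) (u : Fin (n + 1))
    (vis : Finset (Fin (n + 1))) : Finset (Fin (n + 1)) :=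
  Finset.univ.filter (fun x => G.Adj u x ∧ x ∉ vis)

lemma mem_nbrs {G : SimpleGraph (Fin (n + 1))} {u x : Fin (n + 1)} {vis : Finset (Fin (n + 1))} :
    x ∈ nbrs G u vis ↔ G.Adj u x ∧ x ∉ vis := by
  simp [nbrs]

/-- Depth-first search with largest-label-first rule. -/
noncomputable def dfsAux (G : SimpleGraph (Fin (n + 1))) :
    List (Fin (n + 1)) → Finset (Fin (n + 1)) → (Fin (n + 1) → Fin (n + 1)) →
      (Fin (n + 1) → Fin (n + 1)) × Finset (Fin (n + 1))
  | [], vis, par => (par, vis)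
  | u :: rest, vis, par =>
    if h : (nbrs G u vis).Nonempty then
      dfsAux G ((nbrs G u vis).max' h :: u :: rest)
        (insert ((nbrs G u vis).max' h) vis)
        (Function.update par ((nbrs G u vis).max' h) u)
    else dfsAux G rest vis par
termination_by stack vis _ => 2 * (Finset.univ \ vis).card + stack.length
decreasing_by
  · have hv : (nbrs G u vis).max' h ∉ vis := (mem_nbrs.mp ((nbrs G u vis).max'_mem h)).2
    have h1 : Finset.univ \ insert ((nbrs G u vis).max' h) vis =
        (Finset.univ \ vis).erase ((nbrs G u vis).max' h) := by
      ext x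
      simp only [Finset.mem_sdiff, Finset.mem_univ, Finset.mem_insert, Finset.mem_erase,
        true_and]
      tauto
    have h2 : ((nbrs G u vis).max' h) ∈ Finset.univ \ vis := by
      simp [hv]
    rw [h1, Finset.card_erase_of_mem h2]
    have h3 : 1 ≤ (Finset.univ \ vis).card := Finset.card_pos.mpr ⟨_, h2⟩
    simp only [List.length_cons]
    omega
  · simp only [List.length_cons]
    omega

/-- Stability of iterates under extension of the parent function. -/
lemma iterate_stable {α : Type*} {par par' : α → α} {vis : Set α}
    (hagree : ∀ x ∈ vis, par' x = par x) (hclosed : ∀ x ∈ vis, par x ∈ vis)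
    {v : α} (hv : v ∈ vis) (k : ℕ) : par^[k] v ∈ vis ∧ par'^[k] v = par^[k] v := by
  induction k with
  | zero => exact ⟨hv, rfl⟩
  | succ m ih =>
    rw [iterate_succ_apply', iterate_succ_apply']
    exact ⟨hclosed _ ih.1, by rw [ih.2, hagree _ ih.1]⟩

lemma chain_iterates {α : Type*} {par : α → α} :
    ∀ {l : List α} {u : α}, List.Chain' (fun a b => par a = b) (u :: l) →
      ∀ w ∈ u :: l, ∃ k, par^[k] u = w := by
  intro l
  induction l with
  | nil =>
    intro u _ w hw
    simp only [List.mem_singleton] at hw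
    exact ⟨0, hw.symm⟩
  | cons y l' ih =>
    intro u hchain w hw
    rcases List.mem_cons.mp hw with rfl | hw'
    · exact ⟨0, rfl⟩
    · have h1 : par u = y := (List.isChain_cons_cons.mp hchain).1
      obtain ⟨k, hk⟩ := ih (List.isChain_cons_cons.mp hchain).2 w hw'
      exact ⟨k + 1, by rw [iterate_succ_apply, h1, hk]⟩

lemma chain'_next {α : Type*} {R : α → α → Prop} :
    ∀ {l : List α} (h : List.Chain' R l) {v : α} (hv : v ∈ l)
      (hne : ∀ h' : l ≠ [], v ≠ l.getLast h'), ∃ s ∈ l, R v s := by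
  intro l
  induction l with
  | nil => intro _ v hv; simp at hv
  | cons x l' ih =>
    intro h v hv hne
    cases l' with
    | nil =>
      simp only [List.mem_singleton] at hv
      exact absurd hv (hne (by simp))
    | cons y l'' =>
      rcases List.mem_cons.mp hv with rfl | hv'
      · exact ⟨y, by simp, (List.isChain_cons_cons.mp h).1⟩
      · obtain ⟨s, hs, hRs⟩ := ih (List.isChain_cons_cons.mp h).2 hv'
          (fun h' hv2 => hne (by simp) (by rw [List.getLast_cons h']; exact hv2))
        exact ⟨s, by simp [hs], hRs⟩

lemma stack_closed_under_par {α : Type*} {par : α → α} {l : List α} {z : α}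
    (hchain : List.Chain' (fun a b => par a = b) l)
    (hlast : ∀ h : l ≠ [], l.getLast h = z) (hz : par z = z) :
    ∀ v ∈ l, ∀ j, par^[j] v ∈ l := by
  intro v hv j
  induction j with
  | zero => exact hv
  | succ m ih =>
    rw [iterate_succ_apply']
    by_cases hlast' : par^[m] v = l.getLast (by rintro rfl; simp at hv)
    · rw [hlast', hlast]
      rw [hz]
      rw [← hlast (by rintro rfl; simp at hv)]
      exact List.getLast_mem _
    · obtain ⟨s, hs, hRs⟩ := chain'_next hchain ih (fun _ => hlast')
      rw [hRs]
      exact hs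

lemma cycle_eq_root {α : Type*} {par : α → α} {z v : α} {m : ℕ}
    (hz : par z = z) (hreach : ∃ k, par^[k] v = z) (hm : m ≠ 0) (h : par^[m] v = v) :
    v = z := by
  obtain ⟨k, hk⟩ := hreach
  have hiter : ∀ q, par^[q * m] v = v := by
    intro q
    induction q with
    | zero => simp
    | succ r ih => rw [Nat.succ_mul, iterate_add_apply, h, ih]
  have hzfix : ∀ j, par^[j] z = z := by
    intro j
    induction j with
    | zero => rfl
    | succ r ih => rw [iterate_succ_apply', ih, hz]
  have hq : k ≤ (k + 1) * m := by
    have : 1 ≤ m := by omega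
    calc k ≤ k + 1 := by omega
    _ = (k + 1) * 1 := by ring
    _ ≤ (k + 1) * m := by exact Nat.mul_le_mul_left _ this
  have := hiter (k + 1)
  rw [show (k+1) * m = ((k+1) * m - k) + k by omega, iterate_add_apply, hk, hzfix] at this
  exact this.symm

end DFS
section DFSInv

open SimpleGraph Function

variable {n : ℕ} {G : SimpleGraph (Fin (n + 1))}

lemma chain'_imp_mem {α : Type*} {P Q : α → α → Prop} :
    ∀ {l : List α}, List.Chain' P l → (∀ a ∈ l, ∀ b ∈ l, P a b → Q a b) → List.Chain' Q l := by
  intro l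
  induction l with
  | nil => intro _ _; exact List.isChain_nil
  | cons x l' ih =>
    intro h him
    cases l' with
    | nil => exact List.isChain_singleton _
    | cons y l'' =>
      simp only [List.Chain', List.isChain_cons_cons] at h ⊢
      exact ⟨him x (by simp) y (by simp) h.1,
        ih h.2 (fun a ha b hb hab => him a (by simp [ha]) b (by simp [hb]) hab)⟩

lemma chain'_pred {α : Type*} {P : α → α → Prop} :
    ∀ {l : List α} {x b : α}, List.Chain' P (x :: l) → b ∈ l → ∃ w ∈ x :: l, P w b := by
  intro l
  induction l with
  | nil => intro x b _ hb; simp at hb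
  | cons y l' ih =>
    intro x b h hb
    rcases List.mem_cons.mp hb with rfl | hb'
    · exact ⟨x, by simp, (List.isChain_cons_cons.mp h).1⟩
    · obtain ⟨w, hw, hPw⟩ := ih (List.isChain_cons_cons.mp h).2 hb'
      exact ⟨w, by simp [List.mem_cons.mp hw], hPw⟩

/-- The invariant maintained by depth-first search. -/
structure DfsInv (G : SimpleGraph (Fin (n + 1))) (stack : List (Fin (n + 1)))
    (vis : Finset (Fin (n + 1))) (par : Fin (n + 1) → Fin (n + 1)) : Prop where
  root : par 0 = 0
  rootVis : (0 : Fin (n + 1)) ∈ vis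
  parVis : ∀ v ∈ vis, par v ∈ vis
  parAdj : ∀ v ∈ vis, v ≠ 0 → G.Adj v (par v)
  reach : ∀ v ∈ vis, ∃ k, par^[k] v = 0
  stackVis : ∀ v ∈ stack, v ∈ vis
  chain : List.Chain' (fun a b => par a = b ∧ ∀ x, x ∉ vis → G.Adj b x → x < a) stack
  last0 : ∀ h : stack ≠ [], stack.getLast h = 0
  nodupS : stack.Nodup
  closed : ∀ w ∈ vis, w ∉ stack → ∀ x, G.Adj w x → x ∈ vis
  edges : ∀ a b, a ∈ vis → b ∈ vis → G.Adj a b →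
    par a = b ∨ par b = a ∨ (∃ w, par w = a ∧ (∃ k, par^[k] b = w) ∧ b < w) ∨
      (∃ w, par w = b ∧ (∃ k, par^[k] a = w) ∧ a < w)

lemma DfsInv.pureChain {stack vis par} (inv : DfsInv G stack vis par) :
    List.Chain' (fun a b => par a = b) stack :=
  inv.chain.imp (fun _ _ h => h.1)

lemma DfsInv.push {u : Fin (n + 1)} {rest : List (Fin (n + 1))} {vis par}
    (inv : DfsInv G (u :: rest) vis par) (h : (nbrs G u vis).Nonempty) :
    DfsInv G ((nbrs G u vis).max' h :: u :: rest) (insert ((nbrs G u vis).max' h) vis)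
      (Function.update par ((nbrs G u vis).max' h) u) := by
  set v := (nbrs G u vis).max' h with hvdef
  have hv := mem_nbrs.mp ((nbrs G u vis).max'_mem h)
  have hvv : v ∉ vis := hv.2
  have hadj : G.Adj u v := hv.1
  have huvis : u ∈ vis := inv.stackVis u (by simp)
  have hupd : ∀ x ∈ vis, Function.update par v u x = par x := by
    intro x hx
    have hne : x ≠ v := by
      intro hh
      rw [hh] at hx
      exact hvv hx
    exact Function.update_of_ne hne u par
  have hupdv : Function.update par v u v = u := Function.update_self v u par
  have hstable : ∀ x ∈ vis, ∀ k, par^[k] x ∈ vis ∧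
      (Function.update par v u)^[k] x = par^[k] x := fun x hx k =>
    iterate_stable (vis := (vis : Set (Fin (n+1)))) hupd inv.parVis hx k
  have hstackv : v ∉ u :: rest := fun hmem => hvv (inv.stackVis v hmem)
  -- the pure chain on the new stack
  have hchain_new : List.Chain' (fun a b => Function.update par v u a = b ∧
      ∀ x, x ∉ insert v vis → G.Adj b x → x < a) (v :: u :: rest) := by
    simp only [List.Chain', List.isChain_cons_cons]
    constructor
    · refine ⟨hupdv, fun x hx hadjx => ?_⟩
      have hxv : x ≠ v := fun hh => hx (hh ▸ Finset.mem_insert_self v vis)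
      have hxvis : x ∉ vis := fun hh => hx (Finset.mem_insert_of_mem hh)
      have : x ∈ nbrs G u vis := mem_nbrs.mpr ⟨hadjx, hxvis⟩
      exact lt_of_le_of_ne (Finset.le_max' _ _ this) hxv
    · refine chain'_imp_mem inv.chain (fun a ha b hb hab => ?_)
      refine ⟨by rw [hupd a (inv.stackVis a ha)]; exact hab.1, fun x hx hadjx => ?_⟩
      exact hab.2 x (fun hh => hx (Finset.mem_insert_of_mem hh)) hadjx
  have hpure_new : List.Chain' (fun a b => Function.update par v u a = b) (v :: u :: rest) :=
    hchain_new.imp (fun _ _ hh => hh.1)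
  -- key fact about edges from v to visited vertices
  have key : ∀ c ∈ vis, G.Adj c v →
      Function.update par v u v = c ∨
      ∃ w, Function.update par v u w = c ∧
        (∃ k, (Function.update par v u)^[k] v = w) ∧ v < w := by
    intro c hc hadjc
    have hcstack : c ∈ u :: rest := by
      by_contra hcs
      exact hvv (inv.closed c hc hcs v hadjc)
    rcases List.mem_cons.mp hcstack with rfl | hcrest
    · left; exact hupdv
    · obtain ⟨w, hw, hPw⟩ := chain'_pred inv.chain hcrest
      right
      refine ⟨w, by rw [hupd w (inv.stackVis w hw)]; exact hPw.1, ?_, hPw.2 v hvv hadjc⟩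
      exact chain_iterates hpure_new w (List.mem_cons_of_mem v hw)
  constructor
  case root => rw [hupd 0 inv.rootVis]; exact inv.root
  case rootVis => exact Finset.mem_insert_of_mem inv.rootVis
  case parVis =>
    intro x hx
    rcases Finset.mem_insert.mp hx with rfl | hx'
    · rw [hupdv]; exact Finset.mem_insert_of_mem huvis
    · rw [hupd x hx']; exact Finset.mem_insert_of_mem (inv.parVis x hx')
  case parAdj =>
    intro x hx hx0
    rcases Finset.mem_insert.mp hx with rfl | hx'
    · rw [hupdv]; exact hadj.symm
    · rw [hupd x hx']; exact inv.parAdj x hx' hx0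
  case reach =>
    intro x hx
    rcases Finset.mem_insert.mp hx with rfl | hx'
    · obtain ⟨k, hk⟩ := inv.reach u huvis
      refine ⟨k + 1, ?_⟩
      rw [iterate_succ_apply, hupdv, (hstable u huvis k).2, hk]
    · obtain ⟨k, hk⟩ := inv.reach x hx'
      exact ⟨k, by rw [(hstable x hx' k).2, hk]⟩
  case stackVis =>
    intro x hx
    rcases List.mem_cons.mp hx with rfl | hx'
    · exact Finset.mem_insert_self _ _
    · exact Finset.mem_insert_of_mem (inv.stackVis x hx')
  case chain => exact hchain_new
  case last0 =>
    intro _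
    rw [List.getLast_cons (by simp)]
    exact inv.last0 (by simp)
  case nodupS => exact List.nodup_cons.mpr ⟨hstackv, inv.nodupS⟩
  case closed =>
    intro w hw hws x hadjx
    have hwv : w ≠ v := fun hh => hws (hh ▸ List.mem_cons_self)
    have hw' : w ∈ vis := by
      rcases Finset.mem_insert.mp hw with rfl | hh
      · exact absurd rfl hwv
      · exact hh
    have hws' : w ∉ u :: rest := fun hh => hws (List.mem_cons_of_mem v hh)
    exact Finset.mem_insert_of_mem (inv.closed w hw' hws' x hadjx)
  case edges =>
    intro a b ha hb hadjab
    rcases Finset.mem_insert.mp ha with rfl | ha'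
    · -- a = v
      have hb' : b ∈ vis := by
        rcases Finset.mem_insert.mp hb with rfl | hh
        · exact absurd rfl hadjab.ne
        · exact hh
      rcases key b hb' hadjab.symm with hk | ⟨w, hw1, hw2, hw3⟩
      · exact Or.inl hk
      · exact Or.inr (Or.inr (Or.inr ⟨w, hw1, hw2, hw3⟩))
    · rcases Finset.mem_insert.mp hb with rfl | hb'
      · -- b = v
        rcases key a ha' hadjab with hk | ⟨w, hw1, hw2, hw3⟩
        · exact Or.inr (Or.inl hk)
        · exact Or.inr (Or.inr (Or.inl ⟨w, hw1, hw2, hw3⟩))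
      · -- both old
        rcases inv.edges a b ha' hb' hadjab with h1 | h1 | ⟨w, hw1, ⟨k, hk⟩, hw3⟩ | ⟨w, hw1, ⟨k, hk⟩, hw3⟩
        · exact Or.inl (by rw [hupd a ha']; exact h1)
        · exact Or.inr (Or.inl (by rw [hupd b hb']; exact h1))
        · refine Or.inr (Or.inr (Or.inl ⟨w, ?_, ⟨k, ?_⟩, hw3⟩))
          · rw [hupd w ?_]; exact hw1
            rw [← hk]; exact (hstable b hb' k).1
          · rw [(hstable b hb' k).2]; exact hk
        · refine Or.inr (Or.inr (Or.inr ⟨w, ?_, ⟨k, ?_⟩, hw3⟩))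
          · rw [hupd w ?_]; exact hw1
            rw [← hk]; exact (hstable a ha' k).1
          · rw [(hstable a ha' k).2]; exact hk

lemma DfsInv.pop {u : Fin (n + 1)} {rest : List (Fin (n + 1))} {vis par}
    (inv : DfsInv G (u :: rest) vis par) (h : ¬ (nbrs G u vis).Nonempty) :
    DfsInv G rest vis par := by
  constructor
  case root => exact inv.root
  case rootVis => exact inv.rootVis
  case parVis => exact inv.parVis
  case parAdj => exact inv.parAdj
  case reach => exact inv.reach
  case stackVis => exact fun x hx => inv.stackVis x (List.mem_cons_of_mem u hx)
  case chain => exact inv.chain.tail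
  case last0 =>
    intro h'
    rw [← List.getLast_cons (a := u) h']
    exact inv.last0 (by simp)
  case nodupS => exact (List.nodup_cons.mp inv.nodupS).2
  case closed =>
    intro w hw hws x hadjx
    by_cases hwu : w = u
    · subst hwu
      by_contra hxvis
      exact h ⟨x, mem_nbrs.mpr ⟨hadjx, hxvis⟩⟩
    · exact inv.closed w hw (by simp [hwu, hws]) x hadjx
  case edges => exact inv.edges

end DFSInv
section DFSMain

open SimpleGraph Function

variable {n : ℕ} {G : SimpleGraph (Fin (n + 1))}

theorem dfsAux_spec (G : SimpleGraph (Fin (n + 1))) :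
    ∀ stack vis par, DfsInv G stack vis par →
      DfsInv G [] (dfsAux G stack vis par).2 (dfsAux G stack vis par).1 ∧
      vis ⊆ (dfsAux G stack vis par).2 ∧
      ∀ x ∈ vis, (dfsAux G stack vis par).1 x = par x := by
  intro stack vis par
  induction stack, vis, par using dfsAux.induct (G := G) with
  | case1 vis par =>
    intro inv
    rw [dfsAux]
    exact ⟨inv, le_refl _, fun x _ => rfl⟩
  | case2 u rest vis par h ih =>
    intro inv
    rw [dfsAux, dif_pos h]
    obtain ⟨i1, i2, i3⟩ := ih (inv.push h)
    refine ⟨i1, fun x hx => i2 (Finset.mem_insert_of_mem hx), fun x hx => ?_⟩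
    rw [i3 x (Finset.mem_insert_of_mem hx)]
    apply Function.update_of_ne
    intro hh
    rw [hh] at hx
    exact (mem_nbrs.mp ((nbrs G u vis).max'_mem h)).2 hx
  | case3 u rest vis par h ih =>
    intro inv
    rw [dfsAux, dif_neg h]
    exact ih (inv.pop h)

lemma DfsInv.vis_univ {vis par} (hG : G.Connected) (inv : DfsInv G [] vis par) :
    vis = Finset.univ := by
  have key : ∀ (a b : Fin (n + 1)) (w : G.Walk a b), a ∈ vis → b ∈ vis := by
    intro a b w
    induction w with
    | nil => exact id
    | cons hadj w' ih =>
      intro ha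
      exact ih (inv.closed _ ha (by simp) _ hadj)
  apply Finset.eq_univ_of_forall
  intro v
  exact key 0 v (hG.preconnected 0 v).some inv.rootVis

lemma dfsInv_init (G : SimpleGraph (Fin (n + 1))) : DfsInv G [0] {0} id := by
  constructor
  case root => rfl
  case rootVis => simp
  case parVis => intro v hv; simpa using hv
  case parAdj =>
    intro v hv hv0
    simp only [Finset.mem_singleton] at hv
    exact absurd hv hv0
  case reach =>
    intro v hv
    simp only [Finset.mem_singleton] at hv
    exact ⟨0, hv⟩
  case stackVis => intro v hv; simpa using hv
  case chain => exact List.isChain_singleton _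
  case last0 => intro _; rfl
  case nodupS => simp
  case closed => intro w hw hws; simp at hw hws; simp [hw] at hws
  case edges =>
    intro a b ha hb hadj
    simp only [Finset.mem_singleton] at ha hb
    rw [ha, hb] at hadj
    exact absurd hadj (G.irrefl)

/-- The DFS spanning tree of a connected graph. -/
noncomputable def dfsTree (G : SimpleGraph (Fin (n + 1))) (hG : G.Connected) : RTree n := by
  refine ⟨(dfsAux G [0] {0} id).1, ?_, ?_⟩
  · exact (dfsAux_spec G [0] {0} id (dfsInv_init G)).1.root
  · intro v
    have inv := (dfsAux_spec G [0] {0} id (dfsInv_init G)).1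
    exact inv.reach v (by rw [inv.vis_univ hG]; exact Finset.mem_univ v)

lemma dfsTree_final_inv (G : SimpleGraph (Fin (n + 1))) (hG : G.Connected) :
    DfsInv G [] Finset.univ (dfsTree G hG).p := by
  have inv := (dfsAux_spec G [0] {0} id (dfsInv_init G)).1
  rwa [inv.vis_univ hG] at inv

end DFSMain
section DFST

open SimpleGraph Function

variable {n : ℕ} {G : SimpleGraph (Fin (n + 1))} {t : RTree n}

/-- A spanning tree compatible with DFS structure inside `G`. -/
def GoodTree (G : SimpleGraph (Fin (n + 1))) (t : RTree n) : Prop :=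
  (∀ v : Fin (n + 1), v ≠ 0 → G.Adj v (t.p v)) ∧
  ∀ a b, G.Adj a b → t.p a = b ∨ t.p b = a ∨
    (∃ w, t.p w = a ∧ t.Anc w b ∧ b < w) ∨ (∃ w, t.p w = b ∧ t.Anc w a ∧ a < w)

/-- Extra invariant for the uniqueness argument. -/
structure DfsInvT (G : SimpleGraph (Fin (n + 1))) (t : RTree n) (stack : List (Fin (n + 1)))
    (vis : Finset (Fin (n + 1))) (par : Fin (n + 1) → Fin (n + 1)) : Prop where
  agree : ∀ v ∈ vis, par v = t.p v
  subtree : ∀ w ∈ vis, w ∉ stack → ∀ c, t.p c = w → c ≠ w → c ∈ vis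

lemma tchain_vis {stack vis par} (inv : DfsInv G stack vis par)
    (invT : DfsInvT G t stack vis par) {v : Fin (n + 1)} (hv : v ∈ vis) (k : ℕ) :
    t.p^[k] v ∈ vis ∧ par^[k] v = t.p^[k] v := by
  induction k with
  | zero => exact ⟨hv, rfl⟩
  | succ m ih =>
    obtain ⟨ih1, ih2⟩ := ih
    have hpar : par^[m] v ∈ vis := by rw [ih2]; exact ih1
    constructor
    · rw [iterate_succ_apply', ← invT.agree _ ih1, ← ih2]
      exact inv.parVis _ hpar
    · rw [iterate_succ_apply', iterate_succ_apply', ih2, invT.agree _ ih1]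

lemma desc_closed {u : Fin (n + 1)} {rest vis par} (inv : DfsInv G (u :: rest) vis par)
    (invT : DfsInvT G t (u :: rest) vis par) {w : Fin (n + 1)} (hw : w ∈ vis)
    (hws : w ∉ u :: rest) : ∀ k (v : Fin (n + 1)), t.p^[k] v = w → v ∈ vis ∧ v ∉ u :: rest := by
  intro k
  induction k with
  | zero => intro v hv; rw [iterate_zero_apply] at hv; subst hv; exact ⟨hw, hws⟩
  | succ m ih =>
    intro v hv
    rw [iterate_succ_apply] at hv
    obtain ⟨hc_vis, hc_stack⟩ := ih (t.p v) hv
    by_cases hvc : v = t.p v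
    · rw [← hvc] at hc_vis hc_stack; exact ⟨hc_vis, hc_stack⟩
    · refine ⟨invT.subtree _ hc_vis hc_stack v rfl hvc, ?_⟩
      intro hvstack
      apply hc_stack
      have h1 : par v ∈ u :: rest := by
        have := stack_closed_under_par inv.pureChain inv.last0 inv.root v hvstack 1
        simpa using this
      rwa [invT.agree v (inv.stackVis v hvstack)] at h1

lemma push_child (hGt : GoodTree G t) {u : Fin (n + 1)} {rest vis par}
    (inv : DfsInv G (u :: rest) vis par) (invT : DfsInvT G t (u :: rest) vis par)
    (h : (nbrs G u vis).Nonempty) : t.p ((nbrs G u vis).max' h) = u := by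
  set v := (nbrs G u vis).max' h with hvdef
  have hv := mem_nbrs.mp ((nbrs G u vis).max'_mem h)
  have hvv : v ∉ vis := hv.2
  have hadj : G.Adj u v := hv.1
  have huvis : u ∈ vis := inv.stackVis u (by simp)
  rcases hGt.2 u v hadj with h1 | h1 | ⟨w, hw1, hw2, hw3⟩ | ⟨w, hw1, hw2, hw3⟩
  · -- t.p u = v : impossible, v would be visited
    exfalso
    have := (tchain_vis inv invT huvis 1).1
    rw [iterate_one, h1] at this
    exact hvv this
  · exact h1
  · -- ∃ w, t.p w = u ∧ t.Anc w v ∧ v < w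
    exfalso
    by_cases hwvis : w ∈ vis
    · by_cases hwstack : w ∈ u :: rest
      · -- w on the stack: forces u = 0, stack = [0], contradiction with v < w = 0
        have hparw : par w = u := by rw [invT.agree w hwvis, hw1]
        obtain ⟨k, hk⟩ := chain_iterates inv.pureChain w hwstack
        have hcyc : par^[k + 1] u = u := by rw [iterate_succ_apply', hk, hparw]
        have hu0 : u = 0 := cycle_eq_root inv.root (inv.reach u huvis) (by omega) hcyc
        have hroot_iter : ∀ j, par^[j] (0 : Fin (n + 1)) = 0 := by
          intro j
          induction j with
          | zero => rfl
          | succ r ihr => rw [iterate_succ_apply', ihr, inv.root]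
        have hw0 : w = 0 := by rw [hu0] at hk; rw [← hk, hroot_iter]
        rw [hw0] at hw3
        exact absurd hw3 (by simp)
      · -- w visited but not on stack: v would be visited
        obtain ⟨k, hk⟩ := hw2
        exact hvv ((desc_closed inv invT hwvis hwstack k v hk).1)
    · -- w unvisited: w is an unvisited neighbor of u larger than v
      have hw0 : w ≠ 0 := fun hh => hwvis (hh ▸ inv.rootVis)
      have hadjw : G.Adj u w := by
        have := hGt.1 w hw0
        rw [hw1] at this
        exact this.symm
      have : w ∈ nbrs G u vis := mem_nbrs.mpr ⟨hadjw, hwvis⟩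
      have := Finset.le_max' _ _ this
      rw [← hvdef] at this
      omega
  · -- ∃ w, t.p w = v ∧ t.Anc w u ∧ u < w : w is visited, so v = t.p w is visited
    exfalso
    obtain ⟨k, hk⟩ := hw2
    have hwvis : w ∈ vis := by
      have := (tchain_vis inv invT huvis k).1
      rwa [hk] at this
    have := (tchain_vis inv invT hwvis 1).1
    rw [iterate_one, hw1] at this
    exact hvv this

lemma DfsInvT.push (hGt : GoodTree G t) {u : Fin (n + 1)} {rest vis par}
    (inv : DfsInv G (u :: rest) vis par) (invT : DfsInvT G t (u :: rest) vis par)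
    (h : (nbrs G u vis).Nonempty) :
    DfsInvT G t ((nbrs G u vis).max' h :: u :: rest) (insert ((nbrs G u vis).max' h) vis)
      (Function.update par ((nbrs G u vis).max' h) u) := by
  set v := (nbrs G u vis).max' h with hvdef
  have hvv : v ∉ vis := (mem_nbrs.mp ((nbrs G u vis).max'_mem h)).2
  constructor
  · intro x hx
    rcases Finset.mem_insert.mp hx with rfl | hx'
    · rw [Function.update_self, push_child hGt inv invT h]
    · have hne : x ≠ v := fun hh => hvv (hh ▸ hx')
      rw [Function.update_of_ne hne, invT.agree x hx']
  · intro w hw hws c hc hcw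
    have hwv : w ≠ v := fun hh => hws (hh ▸ List.mem_cons_self)
    have hw' : w ∈ vis := by
      rcases Finset.mem_insert.mp hw with rfl | hh
      · exact absurd rfl hwv
      · exact hh
    have hws' : w ∉ u :: rest := fun hh => hws (List.mem_cons_of_mem v hh)
    exact Finset.mem_insert_of_mem (invT.subtree w hw' hws' c hc hcw)

lemma DfsInvT.pop (hGt : GoodTree G t) {u : Fin (n + 1)} {rest vis par}
    (inv : DfsInv G (u :: rest) vis par) (invT : DfsInvT G t (u :: rest) vis par)
    (h : ¬ (nbrs G u vis).Nonempty) : DfsInvT G t rest vis par := by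
  constructor
  · exact invT.agree
  · intro w hw hws c hc hcw
    by_cases hwu : w = u
    · subst hwu
      have hc0 : c ≠ 0 := by
        rintro rfl
        rw [t.root] at hc
        exact hcw hc
      have hadjc : G.Adj w c := by
        have := hGt.1 c hc0
        rw [hc] at this
        exact this.symm
      by_contra hcvis
      exact h ⟨c, mem_nbrs.mpr ⟨hadjc, hcvis⟩⟩
    · exact invT.subtree w hw (by simp [hws, hwu]) c hc hcw

theorem dfsAux_specT (G : SimpleGraph (Fin (n + 1))) (t : RTree n) (hGt : GoodTree G t) :
    ∀ stack vis par, DfsInv G stack vis par → DfsInvT G t stack vis par →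
      ∀ x ∈ (dfsAux G stack vis par).2, (dfsAux G stack vis par).1 x = t.p x := by
  intro stack vis par
  induction stack, vis, par using dfsAux.induct (G := G) with
  | case1 vis par =>
    intro inv invT x hx
    rw [dfsAux] at hx ⊢
    exact invT.agree x hx
  | case2 u rest vis par h ih =>
    intro inv invT x hx
    rw [dfsAux, dif_pos h] at hx ⊢
    exact ih (inv.push h) (invT.push hGt inv h) x hx
  | case3 u rest vis par h ih =>
    intro inv invT x hx
    rw [dfsAux, dif_neg h] at hx ⊢
    exact ih (inv.pop h) (invT.pop hGt inv h) x hx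

lemma dfsInvT_init (G : SimpleGraph (Fin (n + 1))) (t : RTree n) : DfsInvT G t [0] {0} id := by
  constructor
  · intro v hv
    simp only [Finset.mem_singleton] at hv
    subst hv
    rw [t.root]; rfl
  · intro w hw hws
    simp only [Finset.mem_singleton] at hw
    simp [hw] at hws

theorem dfsTree_unique (G : SimpleGraph (Fin (n + 1))) (hG : G.Connected) (t : RTree n)
    (hGt : GoodTree G t) : dfsTree G hG = t := by
  apply Subtype.ext
  funext v
  have h1 := dfsAux_specT G t hGt [0] {0} id (dfsInv_init G) (dfsInvT_init G t)
  have h2 := (dfsAux_spec G [0] {0} id (dfsInv_init G)).1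
  exact h1 v (by rw [h2.vis_univ hG]; exact Finset.mem_univ v)

end DFST
section Bij

open SimpleGraph Function

variable {n : ℕ}

/-- The type of inversion pairs. -/
abbrev InvType (t : RTree n) := {q : Fin (n + 1) × Fin (n + 1) // t.InvPair q}

/-- Adding a set of inversion-pair edges to a rooted tree. -/
noncomputable def graphOf (t : RTree n) (S : Finset (InvType t)) : SimpleGraph (Fin (n + 1)) :=
  SimpleGraph.fromRel (fun a b => (a ≠ 0 ∧ t.p a = b) ∨ ∃ q ∈ S, a = q.1.1 ∧ b = t.p q.1.2)

section InvPairFacts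

variable {t : RTree n} {q q' : Fin (n + 1) × Fin (n + 1)}

lemma RTree.InvPair.i_ne_zero (hq : t.InvPair q) : q.1 ≠ 0 := by
  obtain ⟨h1, h2, h3⟩ := hq
  exact Fin.pos_iff_ne_zero.mp h1

lemma RTree.InvPair.j_ne_zero (hq : t.InvPair q) : q.2 ≠ 0 := by
  obtain ⟨h1, h2, h3⟩ := hq
  exact Fin.pos_iff_ne_zero.mp (h1.trans h2)

lemma RTree.InvPair.j_ne_i (hq : t.InvPair q) : q.2 ≠ q.1 := by
  obtain ⟨h1, h2, h3⟩ := hq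
  exact h2.ne'

lemma RTree.InvPair.anc (hq : t.InvPair q) : t.Anc q.2 q.1 := hq.2.2

lemma RTree.InvPair.lt (hq : t.InvPair q) : q.1 < q.2 := hq.2.1

lemma RTree.InvPair.i_pos (hq : t.InvPair q) : 0 < q.1 := hq.1

lemma RTree.InvPair.depth_lt (hq : t.InvPair q) : t.depth q.2 < t.depth q.1 :=
  RTree.anc_strict_depth hq.anc hq.j_ne_i

lemma RTree.InvPair.i_ne_pj (hq : t.InvPair q) : q.1 ≠ t.p q.2 := by
  intro h
  have h1 := RTree.depth_parent (t := t) hq.j_ne_zero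
  have h2 := hq.depth_lt
  rw [← h] at h1
  omega

lemma RTree.InvPair.pi_ne_pj (hq : t.InvPair q) : t.p q.1 ≠ t.p q.2 := by
  intro h
  have h1 := RTree.depth_parent (t := t) hq.j_ne_zero
  have h2 := RTree.depth_parent (t := t) hq.i_ne_zero
  have h3 := hq.depth_lt
  rw [h] at h2
  omega

lemma RTree.InvPair.ppj_ne_i (hq : t.InvPair q) : t.p (t.p q.2) ≠ q.1 := by
  intro h
  by_cases hpj : t.p q.2 = 0
  · rw [hpj, t.root] at h
    exact hq.i_ne_zero h.symm
  · have h1 := RTree.depth_parent (t := t) hq.j_ne_zero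
    have h2 := RTree.depth_parent (t := t) hpj
    have h3 := hq.depth_lt
    rw [h] at h2
    omega

lemma RTree.InvPair.unique (hq : t.InvPair q) (hq' : t.InvPair q')
    (h : s(q.1, t.p q.2) = s(q'.1, t.p q'.2)) : q = q' := by
  rcases Sym2.eq_iff.mp h with ⟨h1, h2⟩ | ⟨h1, h2⟩
  · have hd : t.depth q.2 = t.depth q'.2 := by
      have e1 := RTree.depth_parent (t := t) hq.j_ne_zero
      have e2 := RTree.depth_parent (t := t) hq'.j_ne_zero
      rw [h2] at e1
      omega
    have : q.2 = q'.2 := by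
      apply RTree.anc_eq_of_depth_eq hq.anc ?_ hd
      rw [h1]
      exact hq'.anc
    exact Prod.ext h1 this
  · exfalso
    have e1 := RTree.depth_parent (t := t) hq.j_ne_zero
    have e2 := RTree.depth_parent (t := t) hq'.j_ne_zero
    have e3 := hq.depth_lt
    have e4 := hq'.depth_lt
    rw [← h1] at e2
    rw [h2] at e1
    omega

end InvPairFacts

variable {t : RTree n} {S : Finset (InvType t)}

lemma graphOf_adj_iff {a b : Fin (n + 1)} :
    (graphOf t S).Adj a b ↔ a ≠ b ∧
      (((a ≠ 0 ∧ t.p a = b) ∨ ∃ q ∈ S, a = q.1.1 ∧ b = t.p q.1.2) ∨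
       ((b ≠ 0 ∧ t.p b = a) ∨ ∃ q ∈ S, b = q.1.1 ∧ a = t.p q.1.2)) := Iff.rfl

lemma tree_edge_adj {v : Fin (n + 1)} (hv : v ≠ 0) : (graphOf t S).Adj v (t.p v) :=
  ⟨(RTree.parent_ne hv).symm, Or.inl (Or.inl ⟨hv, rfl⟩)⟩

lemma pair_edge_adj {q : InvType t} (hq : q ∈ S) :
    (graphOf t S).Adj q.1.1 (t.p q.1.2) :=
  ⟨q.2.i_ne_pj, Or.inl (Or.inr ⟨q, hq, rfl, rfl⟩)⟩

lemma graphOf_connected : (graphOf t S).Connected := by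
  rw [SimpleGraph.connected_iff]
  have reach0 : ∀ (v : Fin (n + 1)), (graphOf t S).Reachable v 0 := by
    intro v
    suffices H : ∀ d (v : Fin (n + 1)), t.depth v ≤ d → (graphOf t S).Reachable v 0 from
      H _ v le_rfl
    intro d
    induction d with
    | zero =>
      intro v hv
      rw [RTree.depth_eq_zero_iff.mp (Nat.le_zero.mp hv)]
    | succ d ih =>
      intro v hv
      by_cases h0 : v = 0
      · rw [h0]
      · have := RTree.depth_parent (t := t) h0
        exact (tree_edge_adj h0).reachable.trans (ih (t.p v) (by omega))
  exact ⟨fun a b => (reach0 a).trans (reach0 b).symm, ⟨0⟩⟩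

lemma goodTree_graphOf : GoodTree (graphOf t S) t := by
  constructor
  · exact fun v hv => tree_edge_adj hv
  · intro a b hab
    rcases hab.2 with (⟨ha0, h⟩ | ⟨q, hq, rfl, rfl⟩) | (⟨hb0, h⟩ | ⟨q, hq, rfl, rfl⟩)
    · exact Or.inl h
    · exact Or.inr (Or.inr (Or.inr ⟨q.1.2, rfl, q.2.anc, q.2.lt⟩))
    · exact Or.inr (Or.inl h)
    · exact Or.inr (Or.inr (Or.inl ⟨q.1.2, rfl, q.2.anc, q.2.lt⟩))

lemma mem_S_iff_adj {q : InvType t} :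
    q ∈ S ↔ (graphOf t S).Adj q.1.1 (t.p q.1.2) := by
  constructor
  · exact pair_edge_adj
  · intro h
    rcases h.2 with (⟨ha0, he⟩ | ⟨q', hq', h1, h2⟩) | (⟨hb0, he⟩ | ⟨q', hq', h1, h2⟩)
    · exact absurd he q.2.pi_ne_pj
    · have : q = q' := Subtype.ext (q.2.unique q'.2 (by rw [h1, h2]))
      rwa [this]
    · exact absurd he q.2.ppj_ne_i
    · -- q.1.1 = t.p q'.1.2 and q'.1.1 = t.p q.1.2 : depth contradiction
      exfalso
      have e1 := RTree.depth_parent (t := t) q.2.j_ne_zero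
      have e2 := RTree.depth_parent (t := t) q'.2.j_ne_zero
      have e3 := q.2.depth_lt
      have e4 := q'.2.depth_lt
      rw [← h2] at e2
      rw [h1] at e1
      omega

lemma goodTree_dfsTree (G : SimpleGraph (Fin (n + 1))) (hG : G.Connected) :
    GoodTree G (dfsTree G hG) := by
  have inv := dfsTree_final_inv G hG
  constructor
  · exact fun v hv => inv.parAdj v (Finset.mem_univ v) hv
  · intro a b hab
    exact inv.edges a b (Finset.mem_univ a) (Finset.mem_univ b) hab

lemma graphOf_dfsTree_eq (G : SimpleGraph (Fin (n + 1))) (hG : G.Connected)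
    (S : Finset (InvType (dfsTree G hG)))
    (hS : ∀ q : InvType (dfsTree G hG), q ∈ S ↔ G.Adj q.1.1 ((dfsTree G hG).p q.1.2)) :
    graphOf (dfsTree G hG) S = G := by
  set t := dfsTree G hG with htdef
  have inv := dfsTree_final_inv G hG
  ext a b
  constructor
  · intro h
    rcases h.2 with (⟨ha0, he⟩ | ⟨q, hq, h1, h2⟩) | (⟨hb0, he⟩ | ⟨q, hq, h1, h2⟩)
    · rw [← he]; exact inv.parAdj a (Finset.mem_univ a) ha0
    · rw [h1, h2]; exact (hS q).mp hq
    · rw [← he]; exact (inv.parAdj b (Finset.mem_univ b) hb0).symm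
    · rw [h1, h2]; exact ((hS q).mp hq).symm
  · intro hab
    refine ⟨hab.ne, ?_⟩
    rcases inv.edges a b (Finset.mem_univ a) (Finset.mem_univ b) hab with
      h1 | h1 | ⟨w, hw1, hw2, hw3⟩ | ⟨w, hw1, hw2, hw3⟩
    · -- t.p a = b
      left; left
      refine ⟨?_, h1⟩
      rintro rfl
      rw [inv.root] at h1
      exact hab.ne h1
    · right; left
      refine ⟨?_, h1⟩
      rintro rfl
      rw [inv.root] at h1
      exact hab.ne h1.symm
    · -- ∃ w, p w = a, w anc of b, b < w : pair (b, w)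
      right; right
      have hb0 : (0 : Fin (n + 1)) < b := by
        rcases Fin.eq_zero_or_eq_succ b with rfl | ⟨c, hc⟩
        · exfalso
          obtain ⟨k, hk⟩ := hw2
          have hroot_iter : ∀ j, t.p^[j] (0 : Fin (n + 1)) = 0 := by
            intro j
            induction j with
            | zero => rfl
            | succ r ihr => rw [iterate_succ_apply', ihr, inv.root]
          rw [hroot_iter k] at hk
          rw [← hk] at hw3
          exact absurd hw3 (by simp)
        · exact Fin.pos_iff_ne_zero.mpr (by rw [hc]; exact Fin.succ_ne_zero c)
      refine ⟨⟨(b, w), ⟨hb0, hw3, hw2⟩⟩, ?_, rfl, by rw [hw1]⟩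
      rw [hS]
      simpa [hw1] using hab.symm
    · left; right
      have ha0 : (0 : Fin (n + 1)) < a := by
        rcases Fin.eq_zero_or_eq_succ a with rfl | ⟨c, hc⟩
        · exfalso
          obtain ⟨k, hk⟩ := hw2
          have hroot_iter : ∀ j, t.p^[j] (0 : Fin (n + 1)) = 0 := by
            intro j
            induction j with
            | zero => rfl
            | succ r ihr => rw [iterate_succ_apply', ihr, inv.root]
          rw [hroot_iter k] at hk
          rw [← hk] at hw3
          exact absurd hw3 (by simp)
        · exact Fin.pos_iff_ne_zero.mpr (by rw [hc]; exact Fin.succ_ne_zero c)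
      refine ⟨⟨(a, w), ⟨ha0, hw3, hw2⟩⟩, ?_, rfl, by rw [hw1]⟩
      rw [hS]
      simpa [hw1] using hab

end Bij
section Count

open SimpleGraph Function

variable {n : ℕ} {t : RTree n} {S : Finset (InvType t)}

open scoped Classical

lemma edgeFinset_graphOf :
    (graphOf t S).edgeFinset =
      ((Finset.univ.erase 0).image fun v => s(v, t.p v)) ∪
        (S.image fun q => s(q.1.1, t.p q.1.2)) := by
  ext e
  induction e using Sym2.ind with
  | _ a b =>
    rw [SimpleGraph.mem_edgeFinset, SimpleGraph.mem_edgeSet]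
    constructor
    · intro h
      rcases h.2 with (⟨ha0, he⟩ | ⟨q, hq, rfl, rfl⟩) | (⟨hb0, he⟩ | ⟨q, hq, rfl, rfl⟩)
      · exact Finset.mem_union_left _ (Finset.mem_image.mpr
          ⟨a, Finset.mem_erase.mpr ⟨ha0, Finset.mem_univ a⟩, by rw [he]⟩)
      · exact Finset.mem_union_right _ (Finset.mem_image.mpr ⟨q, hq, rfl⟩)
      · exact Finset.mem_union_left _ (Finset.mem_image.mpr
          ⟨b, Finset.mem_erase.mpr ⟨hb0, Finset.mem_univ b⟩, by rw [he, Sym2.eq_swap]⟩)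
      · exact Finset.mem_union_right _ (Finset.mem_image.mpr ⟨q, hq, Sym2.eq_swap⟩)
    · intro h
      rcases Finset.mem_union.mp h with h' | h'
      · obtain ⟨v, hv, he⟩ := Finset.mem_image.mp h'
        have hv0 : v ≠ 0 := (Finset.mem_erase.mp hv).1
        have := tree_edge_adj (S := S) hv0
        rw [← SimpleGraph.mem_edgeSet] at this ⊢
        rwa [← he]
      · obtain ⟨q, hq, he⟩ := Finset.mem_image.mp h'
        have := pair_edge_adj hq
        rw [← SimpleGraph.mem_edgeSet] at this ⊢
        rwa [← he]

lemma card_edgeFinset_graphOf :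
    (graphOf t S).edgeFinset.card = n + S.card := by
  rw [edgeFinset_graphOf]
  have hdisj : Disjoint ((Finset.univ.erase 0).image fun v => s(v, t.p v))
      (S.image fun q => s(q.1.1, t.p q.1.2)) := by
    rw [Finset.disjoint_left]
    intro e he1 he2
    obtain ⟨v, hv, hev⟩ := Finset.mem_image.mp he1
    obtain ⟨q, hq, heq⟩ := Finset.mem_image.mp he2
    have h := hev.trans heq.symm
    rcases Sym2.eq_iff.mp h with ⟨h1, h2⟩ | ⟨h1, h2⟩
    · rw [h1] at h2
      exact q.2.pi_ne_pj h2
    · rw [h1] at h2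
      exact q.2.ppj_ne_i h2
  rw [Finset.card_union_of_disjoint hdisj]
  have hinj1 : Set.InjOn (fun v => s(v, t.p v)) (Finset.univ.erase (0 : Fin (n+1))) := by
    intro v hv w hw h
    simp only [Finset.coe_erase, Set.mem_diff, Finset.mem_coe, Finset.coe_univ,
      Set.mem_univ, true_and, Set.mem_singleton_iff] at hv hw
    rcases Sym2.eq_iff.mp h with ⟨h1, _⟩ | ⟨h1, h2⟩
    · exact h1
    · exfalso
      have hcyc : t.p^[2] v = v := by
        show t.p (t.p v) = v
        rw [h2, h1]
      exact hv (RTree.eq_zero_of_cycle (by omega) hcyc)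
  have hinj2 : Set.InjOn (fun q : InvType t => s(q.1.1, t.p q.1.2)) S := by
    intro q hq q' hq' h
    exact Subtype.ext (q.2.unique q'.2 h)
  have hcard1 : ((Finset.univ.erase 0).image fun v => s(v, t.p v)).card = n := by
    rw [Finset.card_image_of_injOn hinj1, Finset.card_erase_of_mem (Finset.mem_univ 0),
      Finset.card_univ, Fintype.card_fin]
    omega
  have hcard2 : (S.image fun q => s(q.1.1, t.p q.1.2)).card = S.card :=
    Finset.card_image_of_injOn hinj2
  omega

/-- The inverse map of the DFS bijection. -/
noncomputable def invMap (n : ℕ) : (Σ t : RTree n, Finset (InvType t)) →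
    {G : SimpleGraph (Fin (n + 1)) // G.Connected} :=
  fun x => ⟨graphOf x.1 x.2, graphOf_connected⟩

lemma invMap_bijective (n : ℕ) : Function.Bijective (invMap n) := by
  constructor
  · rintro ⟨t, S⟩ ⟨t', S'⟩ h
    have hG : graphOf t S = graphOf t' S' := congrArg Subtype.val h
    have ht : t = t' := by
      have h1 := dfsTree_unique (graphOf t S) graphOf_connected t goodTree_graphOf
      have h2 := dfsTree_unique (graphOf t' S') graphOf_connected t' goodTree_graphOf
      rw [← h1, ← h2]
      congr 1
    subst ht
    have hSS : S = S' := by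
      ext q
      rw [mem_S_iff_adj, mem_S_iff_adj, hG]
    rw [hSS]
  · rintro ⟨G, hG⟩
    refine ⟨⟨dfsTree G hG, Finset.univ.filter
      (fun q : InvType (dfsTree G hG) => G.Adj q.1.1 ((dfsTree G hG).p q.1.2))⟩, ?_⟩
    apply Subtype.ext
    exact graphOf_dfsTree_eq G hG _ (fun q => by simp)

/-- The DFS bijection. -/
noncomputable def dfsEquiv (n : ℕ) :
    (Σ t : RTree n, Finset (InvType t)) ≃ {G : SimpleGraph (Fin (n + 1)) // G.Connected} :=
  Equiv.ofBijective (invMap n) (invMap_bijective n)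

end Count
section Final

open Polynomial

lemma sum_finset_pow_card (α : Type*) [Fintype α] :
    ∑ S : Finset α, (Polynomial.X : Polynomial ℤ) ^ S.card
      = (1 + Polynomial.X) ^ Fintype.card α := by
  classical
  have h := Finset.prod_add (fun _ : α => (Polynomial.X : Polynomial ℤ)) (fun _ => 1)
    Finset.univ
  simp only [Finset.prod_const, Finset.prod_const_one, mul_one, one_pow] at h
  rw [Finset.powerset_univ] at h
  rw [Finset.card_univ] at h
  rw [add_comm] at h
  rw [← h]

theorem connPoly_eq_shifted_invPoly' (n : ℕ) :
    connPoly (n + 1) = Polynomial.X ^ n * (invPoly n).comp (1 + Polynomial.X) := by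
  classical
  rw [connPoly, invPoly, finsum_eq_sum_of_fintype, finsum_eq_sum_of_fintype,
    Polynomial.sum_comp]
  have hR : ∑ T : {G : SimpleGraph (Fin (n + 1)) // G.IsTree},
      ((Polynomial.X : Polynomial ℤ) ^ treeInv T.1).comp (1 + Polynomial.X)
      = ∑ t : RTree n, (1 + Polynomial.X) ^ Fintype.card (InvType t) := by
    refine (Fintype.sum_equiv (treeEquiv n)
      (fun t => (1 + Polynomial.X) ^ Fintype.card (InvType t))
      (fun T => ((Polynomial.X : Polynomial ℤ) ^ treeInv T.1).comp (1 + Polynomial.X))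
      (fun t => ?_)).symm
    rw [Polynomial.X_pow_comp, treeInv_treeEquiv, Nat.card_eq_fintype_card]
  rw [hR]
  have hL : ∑ G : {G : SimpleGraph (Fin (n + 1)) // G.Connected},
      (Polynomial.X : Polynomial ℤ) ^ G.1.edgeFinset.card
      = ∑ x : Σ t : RTree n, Finset (InvType t),
          (Polynomial.X : Polynomial ℤ) ^ (n + x.2.card) := by
    refine (Fintype.sum_equiv (dfsEquiv n)
      (fun x => (Polynomial.X : Polynomial ℤ) ^ (n + x.2.card))
      (fun G => (Polynomial.X : Polynomial ℤ) ^ G.1.edgeFinset.card)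
      (fun x => ?_)).symm
    have h1 : ((dfsEquiv n) x).1 = graphOf x.1 x.2 := rfl
    rw [h1, card_edgeFinset_graphOf]
  rw [hL, ← Finset.univ_sigma_univ, Finset.sum_sigma, Finset.mul_sum]
  apply Finset.sum_congr rfl
  intro t _
  have : ∀ S : Finset (InvType t), (Polynomial.X : Polynomial ℤ) ^ (n + S.card)
      = Polynomial.X ^ n * Polynomial.X ^ S.card := fun S => pow_add _ _ _
  calc ∑ S : Finset (InvType t), (Polynomial.X : Polynomial ℤ) ^ (n + S.card)
      = ∑ S : Finset (InvType t), Polynomial.X ^ n * Polynomial.X ^ S.card :=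
        Finset.sum_congr rfl (fun S _ => this S)
    _ = Polynomial.X ^ n * ∑ S : Finset (InvType t), Polynomial.X ^ S.card := by
        rw [Finset.mul_sum]
    _ = Polynomial.X ^ n * (1 + Polynomial.X) ^ Fintype.card (InvType t) := by
        rw [sum_finset_pow_card]

end Final

/-- `C_{n+1}(x) = x^n * I_{n+1}(1 + x)`: the edge enumerator of labeled connected simple graphs
equals the shifted inversion enumerator of labeled trees. -/
theorem connPoly_eq_shifted_invPoly (n : ℕ) :
    connPoly (n + 1) = Polynomial.X ^ n * (invPoly n).comp (1 + Polynomial.X) := by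
  exact connPoly_eq_shifted_invPoly' n
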